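/- arXiv:1709.03801 — 2 statements merged into one kernel-verified Lean document; each statement's English description precedes it below -/
import Mathlib

section
/- Let A be a synaptic algebra and let e, f ∈ E = {e ∈ A : 0 ≤ e ≤ 1}. Then: (i) if the supremum e ∨ f exists in (E, ≤) (respectively, e ∨ₛ f exists in (E, ≤ₛ)), then (e ∨ f)° = e° ∨ f° (respectively, (e ∨ₛ f)° = e° ∨ f°); (ii) if the infimum e ∧ f exists in (E, ≤) (respectively, e ∧ₛ f exists in (E, ≤ₛ)), then (e ∧ f)° ≤ e° ∧ f° (respectively, (e ∧ₛ f)° ≤ e° ∧ f°), where e° ∨ f° and e° ∧ f° are the join and meet in the orthomodular lattice of projections. -/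
open Filter Topology

/-- The order-unit norm associated with an order relation `le` on a real algebra:
`‖a‖ = inf {λ > 0 : −λ ≤ a ≤ λ}`. -/
noncomputable def ouNorm {R : Type*} [Ring R] [Algebra ℝ R] (le : R → R → Prop) (a : R) : ℝ :=
  sInf {l : ℝ | 0 < l ∧ le (algebraMap ℝ R (-l)) a ∧ le a (algebraMap ℝ R l)}

/-- A synaptic algebra: a real linear subspace `A` (containing `1`) of a unital associative
algebra `R` over `ℝ` (a complex algebra is in particular a real algebra), equipped with a
partial order making it an Archimedean partially ordered real linear space with order unit `1`,
and satisfying axioms SA1–SA8.  The square root (SA5) and the carrier (SA6) are bundled as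
data together with their defining properties. -/
structure SynapticAlgebra (R : Type*) [Ring R] [Algebra ℝ R] where
  A : Submodule ℝ R
  one_mem : (1 : R) ∈ A
  /-- the synaptic order (meaningful on elements of `A`) -/
  le : R → R → Prop
  -- SA1 : Archimedean partially ordered real linear space with order unit 1
  le_refl : ∀ a ∈ A, le a a
  le_antisymm : ∀ a ∈ A, ∀ b ∈ A, le a b → le b a → a = b
  le_trans : ∀ a ∈ A, ∀ b ∈ A, ∀ c ∈ A, le a b → le b c → le a c
  add_le_add_right : ∀ a ∈ A, ∀ b ∈ A, ∀ c ∈ A, le a b → le (a + c) (b + c)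
  smul_nonneg : ∀ r : ℝ, 0 ≤ r → ∀ a ∈ A, le 0 a → le 0 (r • a)
  arch : ∀ a ∈ A, ∀ b ∈ A, (∀ n : ℕ, le ((n : ℝ) • a) b) → le a 0
  one_order_unit : ∀ a ∈ A, ∃ n : ℕ, le a ((n : ℝ) • (1 : R))
  zero_ne_one : (0 : R) ≠ 1
  -- SA2
  sq_mem : ∀ a ∈ A, a * a ∈ A
  sq_nn : ∀ a ∈ A, le 0 (a * a)
  -- SA3
  quad_mem : ∀ a ∈ A, ∀ b ∈ A, a * b * a ∈ A
  quad_nn : ∀ a ∈ A, ∀ b ∈ A, le 0 a → le 0 b → le 0 (a * b * a)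
  -- SA4
  quad_zero : ∀ a ∈ A, ∀ b ∈ A, le 0 b → a * b * a = 0 → a * b = 0 ∧ b * a = 0
  -- SA5 : square roots
  sqrt : R → R
  sqrt_mem : ∀ a ∈ A, le 0 a → sqrt a ∈ A
  sqrt_nn : ∀ a ∈ A, le 0 a → le 0 (sqrt a)
  sqrt_sq : ∀ a ∈ A, le 0 a → sqrt a * sqrt a = a
  sqrt_bicomm : ∀ a ∈ A, le 0 a → ∀ b ∈ A, a * b = b * a → sqrt a * b = b * sqrt a
  sqrt_unique : ∀ a ∈ A, le 0 a → ∀ b ∈ A, le 0 b → b * b = a →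
    (∀ c ∈ A, a * c = c * a → b * c = c * b) → b = sqrt a
  -- SA6 : carriers
  carr : R → R
  carr_mem : ∀ a ∈ A, carr a ∈ A
  carr_idem : ∀ a ∈ A, carr a * carr a = carr a
  carr_spec : ∀ a ∈ A, ∀ b ∈ A, (a * b = 0 ↔ carr a * b = 0)
  -- SA7
  inv_exists : ∀ a ∈ A, le 1 a → ∃ b ∈ A, a * b = 1 ∧ b * a = 1
  -- SA8
  comm_closed : ∀ a ∈ A, ∀ b ∈ A, ∀ f : ℕ → R, (∀ n, f n ∈ A) →
    (∀ n, le (f n) (f (n + 1))) → (∀ m n, f m * f n = f n * f m) →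
    (∀ n, f n * b = b * f n) →
    Filter.Tendsto (fun n => ouNorm le (a - f n)) Filter.atTop (nhds 0) →
    a * b = b * a

namespace SynapticAlgebra

variable {R : Type*} [Ring R] [Algebra ℝ R] (S : SynapticAlgebra R)

/-- `|a| := (a²)^{1/2}`. -/
def absval (a : R) : R := S.sqrt (a * a)

/-- The positive part `a⁺ := (|a| + a)/2`. -/
noncomputable def pospart (a : R) : R := (2⁻¹ : ℝ) • (S.absval a + a)

/-- The spectral resolution `p_{a,λ} := 1 − ((a − λ)⁺)°`. -/
noncomputable def specProj (a : R) (l : ℝ) : R :=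
  1 - S.carr (S.pospart (a - algebraMap ℝ R l))

/-- The spectral order: `a ≤ₛ b` iff `p_{b,λ} ≤ p_{a,λ}` for all real `λ`. -/
noncomputable def specLE (a b : R) : Prop :=
  ∀ l : ℝ, S.le (S.specProj b l) (S.specProj a l)

/-- Projections of the synaptic algebra. -/
def IsProj (p : R) : Prop := p ∈ S.A ∧ p * p = p

/-- The set `E = {e ∈ A : 0 ≤ e ≤ 1}` of effects. -/
def effects : Set R := {e | e ∈ S.A ∧ S.le 0 e ∧ S.le e 1}

/-- `p` is the infimum of the set `T` in the orthomodular lattice `P` of projections. -/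
def IsProjInf (p : R) (T : Set R) : Prop :=
  S.IsProj p ∧ (∀ q ∈ T, S.le p q) ∧ ∀ r, S.IsProj r → (∀ q ∈ T, S.le r q) → S.le r p

/-- `p` is the supremum of the set `T` in the orthomodular lattice `P` of projections. -/
def IsProjSup (p : R) (T : Set R) : Prop :=
  S.IsProj p ∧ (∀ q ∈ T, S.le q p) ∧ ∀ r, S.IsProj r → (∀ q ∈ T, S.le q r) → S.le p r

/-- A Banach (norm-complete) synaptic algebra: every Cauchy sequence in `A`
(w.r.t. the order-unit norm) converges in norm to an element of `A`. -/
noncomputable def IsBanach : Prop :=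
  ∀ f : ℕ → R, (∀ n, f n ∈ S.A) →
    (∀ ε : ℝ, 0 < ε → ∃ N : ℕ, ∀ m ≥ N, ∀ n ≥ N, ouNorm S.le (f m - f n) < ε) →
    ∃ a ∈ S.A, Filter.Tendsto (fun n => ouNorm S.le (a - f n)) Filter.atTop (nhds 0)

/-- The `λ`-eigenprojection `d_{a,λ} := 1 − (a − λ)°`. -/
noncomputable def eigenProj (a : R) (l : ℝ) : R := 1 - S.carr (a - algebraMap ℝ R l)

/-- The bicommutant `CC(a)` (within `A`). -/
def Bicomm (a : R) : Set R :=
  {b | b ∈ S.A ∧ ∀ c ∈ S.A, a * c = c * a → b * c = c * b}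

/-- Projections `p` and `q` are exchanged by a symmetry (`s² = 1`, `sps = q`). -/
def ExchBySymm (p q : R) : Prop := ∃ s ∈ S.A, s * s = 1 ∧ s * p * s = q

/-- The dimension equivalence on projections: a finite chain of projections, consecutive
ones exchanged by symmetries. -/
def DimEquiv (p q : R) : Prop :=
  ∃ (n : ℕ) (c : ℕ → R), c 0 = p ∧ c n = q ∧ (∀ i ≤ n, S.IsProj (c i)) ∧
    ∀ i < n, S.ExchBySymm (c i) (c (i + 1))

/-- `A` is of finite type iff every projection is finite. -/
def FiniteType : Prop :=
  ∀ p, S.IsProj p → ∀ q, S.IsProj q → S.DimEquiv q p → S.le q p → q = p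

/-- The projection lattice `P` is a complete orthomodular lattice: every set of projections
has an infimum and a supremum in `P`. -/
def ProjComplete : Prop :=
  ∀ T : Set R, (∀ p ∈ T, S.IsProj p) →
    (∃ q, S.IsProjInf q T) ∧ (∃ q, S.IsProjSup q T)

/-- A bounded resolution of identity with bound `K`. -/
def IsBoundedResId (p : ℝ → R) (K : ℝ) : Prop :=
  0 ≤ K ∧ (∀ l, S.IsProj (p l)) ∧
  (∀ l, l < -K → p l = 0) ∧ (∀ l, K ≤ l → p l = 1) ∧
  (∀ l l', l ≤ l' → S.le (p l) (p l')) ∧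
  (∀ l, S.IsProjInf (p l) {x | ∃ l' > l, x = p l'})

end SynapticAlgebra

/-- `c` is a regular involution on the subset `T` of the poset `(T, le')`. -/
def IsRegInvPoset {R : Type*} (le' : R → R → Prop) (T : Set R) (c : R → R) : Prop :=
  (∀ a ∈ T, c a ∈ T) ∧ (∀ a ∈ T, c (c a) = a) ∧
  (∀ a ∈ T, ∀ b ∈ T, le' a b → le' (c b) (c a)) ∧
  (∀ a ∈ T, ∀ b ∈ T, le' a (c a) → le' b (c b) → le' a (c b))

/-- `(T, le', c, 0, 1)` is a Kleene poset: a bounded poset with a regular involution. -/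
def IsKleene {R : Type*} [Zero R] [One R] (le' : R → R → Prop) (T : Set R) (c : R → R) : Prop :=
  IsRegInvPoset le' T c ∧ (0 : R) ∈ T ∧ (1 : R) ∈ T ∧ ∀ a ∈ T, le' 0 a ∧ le' a 1

/-- Every pair of elements of `T` has an infimum and a supremum in `(T, le')`. -/
def HasBinSupInf {R : Type*} (le' : R → R → Prop) (T : Set R) : Prop :=
  ∀ a ∈ T, ∀ b ∈ T,
    (∃ m ∈ T, le' m a ∧ le' m b ∧ ∀ x ∈ T, le' x a → le' x b → le' x m) ∧
    (∃ j ∈ T, le' a j ∧ le' b j ∧ ∀ x ∈ T, le' a x → le' b x → le' j x)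


namespace SynapticAlgebra

variable {R : Type*} [Ring R] [Algebra ℝ R] (S : SynapticAlgebra R)

lemma le0_one : S.le 0 1 := by
  have h := S.sq_nn 1 S.one_mem
  rwa [one_mul] at h

lemma sub_nn {a b : R} (ha : a ∈ S.A) (hb : b ∈ S.A) (h : S.le a b) :
    S.le 0 (b - a) := by
  have h2 := S.add_le_add_right a ha b hb (-a) (neg_mem ha) h
  rwa [add_neg_cancel, ← sub_eq_add_neg] at h2

lemma le_of_sub_nn {a b : R} (ha : a ∈ S.A) (hb : b ∈ S.A) (h : S.le 0 (b - a)) :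
    S.le a b := by
  have h2 := S.add_le_add_right 0 (zero_mem _) (b - a) (sub_mem hb ha) a ha h
  rwa [zero_add, sub_add_cancel] at h2

lemma add_nn {a b : R} (ha : a ∈ S.A) (hb : b ∈ S.A) (h1 : S.le 0 a) (h2 : S.le 0 b) :
    S.le 0 (a + b) := by
  have h3 := S.add_le_add_right 0 (zero_mem _) a ha b hb h1
  rw [zero_add] at h3
  exact S.le_trans 0 (zero_mem _) b hb (a + b) (add_mem ha hb) h2 h3

lemma neg_nn {a : R} (ha : a ∈ S.A) (h : S.le a 0) : S.le 0 (-a) := by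
  have h2 := S.sub_nn ha (zero_mem _) h
  rwa [zero_sub] at h2

lemma proj_nn {p : R} (hp : p ∈ S.A) (hp2 : p * p = p) : S.le 0 p := by
  have h := S.sq_nn p hp; rwa [hp2] at h

lemma compl_idem {p : R} (hp2 : p * p = p) : ((1 : R) - p) * (1 - p) = 1 - p := by
  have h : ((1 : R) - p) * p = 0 := by rw [sub_mul, one_mul, hp2, sub_self]
  rw [mul_sub, mul_one, h, sub_zero]

lemma sq_eq_zero {y : R} (hy : y ∈ S.A) (h : y * y = 0) : y = 0 := by
  have h2 := S.quad_zero y hy 1 S.one_mem S.le0_one (by rwa [mul_one])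
  have h3 := h2.1
  rwa [mul_one] at h3

lemma mul_carr {a : R} (ha : a ∈ S.A) : a * S.carr a = a := by
  have hc := S.carr_mem a ha
  have h1 : S.carr a * (1 - S.carr a) = 0 := by
    rw [mul_sub, mul_one, S.carr_idem a ha, sub_self]
  have h2 : a * (1 - S.carr a) = 0 :=
    (S.carr_spec a ha (1 - S.carr a) (sub_mem S.one_mem hc)).mpr h1
  rw [mul_sub, mul_one, sub_eq_zero] at h2
  exact h2.symm

lemma carr_mul {a : R} (ha : a ∈ S.A) (h0 : S.le 0 a) : S.carr a * a = a := by
  have hc := S.carr_mem a ha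
  have hcm : (1 - S.carr a) ∈ S.A := sub_mem S.one_mem hc
  have h2 : a * (1 - S.carr a) = 0 := by
    rw [mul_sub, mul_one, S.mul_carr ha, sub_self]
  have h3 : (1 - S.carr a) * a * (1 - S.carr a) = 0 := by
    rw [mul_assoc, h2, mul_zero]
  have h4 := (S.quad_zero (1 - S.carr a) hcm a ha h0 h3).1
  rw [sub_mul, one_mul, sub_eq_zero] at h4
  exact h4.symm

/-- Lemma M: if `0 ≤ x ≤ z` and `z * b = 0` then `x * b = 0`. -/
lemma ann_of_le {x z b : R} (hx : x ∈ S.A) (hz : z ∈ S.A) (hb : b ∈ S.A)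
    (h0 : S.le 0 x) (hxz : S.le x z) (hzb : z * b = 0) : x * b = 0 := by
  have hqm : S.carr z ∈ S.A := S.carr_mem z hz
  have hq2 := S.carr_idem z hz
  have hcm : (1 - S.carr z) ∈ S.A := sub_mem S.one_mem hqm
  have hc0 : S.le 0 (1 - S.carr z) := S.proj_nn hcm (compl_idem hq2)
  have hz1q : z * (1 - S.carr z) = 0 := by
    rw [mul_sub, mul_one, S.mul_carr hz, sub_self]
  have hw_mem : (1 - S.carr z) * x * (1 - S.carr z) ∈ S.A := S.quad_mem _ hcm x hx
  have hw0 : S.le 0 ((1 - S.carr z) * x * (1 - S.carr z)) := S.quad_nn _ hcm x hx hc0 h0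
  have hzq : (1 - S.carr z) * z * (1 - S.carr z) = 0 := by
    rw [mul_assoc, hz1q, mul_zero]
  have hdiff : (1 - S.carr z) * (z - x) * (1 - S.carr z)
      = -((1 - S.carr z) * x * (1 - S.carr z)) := by
    rw [mul_sub ((1 : R) - S.carr z) z x,
      sub_mul ((1 - S.carr z) * z) ((1 - S.carr z) * x) (1 - S.carr z), hzq, zero_sub]
  have hd0 : S.le 0 (-((1 - S.carr z) * x * (1 - S.carr z))) := by
    rw [← hdiff]
    exact S.quad_nn _ hcm (z - x) (sub_mem hz hx) hc0 (S.sub_nn hx hz hxz)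
  have hle0 : S.le ((1 - S.carr z) * x * (1 - S.carr z)) 0 := by
    apply S.le_of_sub_nn hw_mem (zero_mem _)
    rwa [zero_sub]
  have hw_eq : (1 - S.carr z) * x * (1 - S.carr z) = 0 :=
    S.le_antisymm _ hw_mem 0 (zero_mem _) hle0 hw0
  have h7 := (S.quad_zero (1 - S.carr z) hcm x hx h0 hw_eq).2
  have h8 : x * S.carr z = x := by
    rw [mul_sub, mul_one, sub_eq_zero] at h7; exact h7.symm
  have hqb : S.carr z * b = 0 := (S.carr_spec z hz b hb).mp hzb
  calc x * b = x * S.carr z * b := by rw [h8]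
    _ = x * (S.carr z * b) := by rw [mul_assoc]
    _ = 0 := by rw [hqb, mul_zero]

/-- Uniqueness of positive square roots. -/
lemma eq_sqrt {w s : R} (hw : w ∈ S.A) (hw0 : S.le 0 w) (hs : s ∈ S.A) (hs0 : S.le 0 s)
    (hss : s * s = w) : s = S.sqrt w := by
  have ht : S.sqrt w ∈ S.A := S.sqrt_mem w hw hw0
  have ht0 : S.le 0 (S.sqrt w) := S.sqrt_nn w hw hw0
  have htt : S.sqrt w * S.sqrt w = w := S.sqrt_sq w hw hw0
  have hcomm : S.sqrt w * s = s * S.sqrt w := by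
    apply S.sqrt_bicomm w hw hw0 s hs
    rw [← hss, mul_assoc]
  have hd : (s + S.sqrt w) * (s - S.sqrt w) = 0 := by
    rw [mul_sub, add_mul, add_mul, hss, htt, hcomm]; abel
  have hsum_mem : s + S.sqrt w ∈ S.A := add_mem hs ht
  have hsub_mem : s - S.sqrt w ∈ S.A := sub_mem hs ht
  have hsd : s * (s - S.sqrt w) = 0 := by
    apply S.ann_of_le hs hsum_mem hsub_mem hs0 ?_ hd
    apply S.le_of_sub_nn hs hsum_mem
    rwa [add_sub_cancel_left]
  have htd : S.sqrt w * (s - S.sqrt w) = 0 := by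
    apply S.ann_of_le ht hsum_mem hsub_mem ht0 ?_ hd
    apply S.le_of_sub_nn ht hsum_mem
    rwa [add_sub_cancel_right]
  have hzero : (s - S.sqrt w) * (s - S.sqrt w) = 0 := by
    rw [sub_mul, hsd, htd, sub_zero]
  have h := S.sq_eq_zero hsub_mem hzero
  rwa [sub_eq_zero] at h

lemma pospart_mem {a : R} (ha : a ∈ S.A) : S.pospart a ∈ S.A := by
  unfold pospart absval
  exact S.A.smul_mem _ (add_mem (S.sqrt_mem _ (S.sq_mem a ha) (S.sq_nn a ha)) ha)

lemma absval_of_nn {a : R} (ha : a ∈ S.A) (h0 : S.le 0 a) : S.absval a = a := by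
  unfold absval
  exact (S.eq_sqrt (S.sq_mem a ha) (S.sq_nn a ha) ha h0 rfl).symm

lemma pospart_of_nn {a : R} (ha : a ∈ S.A) (h0 : S.le 0 a) : S.pospart a = a := by
  unfold pospart
  rw [S.absval_of_nn ha h0]
  module

lemma pospart_of_np {a : R} (ha : a ∈ S.A) (h0 : S.le a 0) : S.pospart a = 0 := by
  unfold pospart
  have h1 : S.absval a = -a := by
    unfold absval
    refine (S.eq_sqrt (S.sq_mem a ha) (S.sq_nn a ha) (neg_mem ha) (S.neg_nn ha h0) ?_).symm
    rw [neg_mul_neg]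
  rw [h1, neg_add_cancel, smul_zero]

lemma proj_facts {p q : R} (hp : p ∈ S.A) (hp2 : p * p = p) (hq : q ∈ S.A) (hq2 : q * q = q)
    (h : p * q = p) : q * p = p ∧ S.le p q := by
  have h1 : p * (1 - q) = 0 := by rw [mul_sub, mul_one, h, sub_self]
  have h3 : (1 - q) * p * (1 - q) = 0 := by rw [mul_assoc, h1, mul_zero]
  have h4 := (S.quad_zero (1 - q) (sub_mem S.one_mem hq) p hp (S.proj_nn hp hp2) h3).1
  have hqp : q * p = p := by
    rw [sub_mul, one_mul, sub_eq_zero] at h4; exact h4.symm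
  refine ⟨hqp, ?_⟩
  have hdiff : (q - p) * (q - p) = q - p := by
    rw [sub_mul, mul_sub, mul_sub, hq2, hqp, h, hp2, sub_self, sub_zero]
  exact S.le_of_sub_nn hp hq (S.proj_nn (sub_mem hq hp) hdiff)

lemma proj_mul_of_le {p q : R} (hp : p ∈ S.A) (hp2 : p * p = p) (hq : q ∈ S.A)
    (hq2 : q * q = q) (h : S.le p q) : p * q = p := by
  have h1 : q * (1 - q) = 0 := by rw [mul_sub, mul_one, hq2, sub_self]
  have h2 : p * (1 - q) = 0 :=
    S.ann_of_le hp hq (sub_mem S.one_mem hq) (S.proj_nn hp hp2) h h1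
  rw [mul_sub, mul_one, sub_eq_zero] at h2
  exact h2.symm

lemma carr_eq_self {p : R} (hp : p ∈ S.A) (hp2 : p * p = p) : S.carr p = p := by
  have hc := S.carr_mem p hp
  have hc2 := S.carr_idem p hp
  have h1 : p * S.carr p = p := S.mul_carr hp
  have hp1 : p * (1 - p) = 0 := by rw [mul_sub, mul_one, hp2, sub_self]
  have h2 : S.carr p * (1 - p) = 0 := (S.carr_spec p hp (1 - p) (sub_mem S.one_mem hp)).mp hp1
  have h3 : S.carr p * p = S.carr p := by
    rw [mul_sub, mul_one, sub_eq_zero] at h2; exact h2.symm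
  exact S.le_antisymm _ hc _ hp (S.proj_facts hc hc2 hp hp2 h3).2
    (S.proj_facts hp hp2 hc hc2 h1).2

lemma carr_smul {a : R} (ha : a ∈ S.A) {r : ℝ} (hr : r ≠ 0) : S.carr (r • a) = S.carr a := by
  have hra : r • a ∈ S.A := S.A.smul_mem r ha
  have hc1 := S.carr_mem _ hra
  have hi1 := S.carr_idem _ hra
  have hc2 := S.carr_mem a ha
  have hi2 := S.carr_idem a ha
  have m1 : (1 - S.carr a) ∈ S.A := sub_mem S.one_mem hc2
  have m2 : (1 - S.carr (r • a)) ∈ S.A := sub_mem S.one_mem hc1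
  have e1 : a * (1 - S.carr a) = 0 := by rw [mul_sub, mul_one, S.mul_carr ha, sub_self]
  have e2 : (r • a) * (1 - S.carr a) = 0 := by rw [smul_mul_assoc, e1, smul_zero]
  have e3 : S.carr (r • a) * (1 - S.carr a) = 0 := (S.carr_spec _ hra _ m1).mp e2
  have e4 : (r • a) * (1 - S.carr (r • a)) = 0 := by
    rw [mul_sub, mul_one, S.mul_carr hra, sub_self]
  have e5 : a * (1 - S.carr (r • a)) = 0 := by
    have h : a * (1 - S.carr (r • a)) = r⁻¹ • ((r • a) * (1 - S.carr (r • a))) := by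
      rw [smul_mul_assoc, smul_smul, inv_mul_cancel₀ hr, one_smul]
    rw [h, e4, smul_zero]
  have e6 : S.carr a * (1 - S.carr (r • a)) = 0 := (S.carr_spec a ha _ m2).mp e5
  have f3 : S.carr (r • a) * S.carr a = S.carr (r • a) := by
    rw [mul_sub, mul_one, sub_eq_zero] at e3; exact e3.symm
  have f6 : S.carr a * S.carr (r • a) = S.carr a := by
    rw [mul_sub, mul_one, sub_eq_zero] at e6; exact e6.symm
  exact S.le_antisymm _ hc1 _ hc2 (S.proj_facts hc1 hi1 hc2 hi2 f3).2
    (S.proj_facts hc2 hi2 hc1 hi1 f6).2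

lemma carr_zero : S.carr (0 : R) = 0 := by
  have h := (S.carr_spec 0 (zero_mem _) 1 S.one_mem).mp (zero_mul 1)
  rwa [mul_one] at h

lemma carr_mono {x z : R} (hx : x ∈ S.A) (hz : z ∈ S.A) (h0 : S.le 0 x) (hxz : S.le x z) :
    S.le (S.carr x) (S.carr z) := by
  have hcx := S.carr_mem x hx
  have hcz := S.carr_mem z hz
  have h1 : z * (1 - S.carr z) = 0 := by rw [mul_sub, mul_one, S.mul_carr hz, sub_self]
  have h2 : x * (1 - S.carr z) = 0 := S.ann_of_le hx hz (sub_mem S.one_mem hcz) h0 hxz h1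
  have h3 : S.carr x * (1 - S.carr z) = 0 :=
    (S.carr_spec x hx _ (sub_mem S.one_mem hcz)).mp h2
  have h4 : S.carr x * S.carr z = S.carr x := by
    rw [mul_sub, mul_one, sub_eq_zero] at h3; exact h3.symm
  exact (S.proj_facts hcx (S.carr_idem x hx) hcz (S.carr_idem z hz) h4).2

lemma le_carr_of_effect {x : R} (hm : x ∈ S.A) (h0 : S.le 0 x) (h1 : S.le x 1) :
    S.le x (S.carr x) := by
  have hc := S.carr_mem x hm
  have key : S.carr x * (1 - x) * S.carr x = S.carr x - x := by
    rw [mul_sub, mul_one, S.carr_mul hm h0, sub_mul, S.carr_idem x hm, S.mul_carr hm]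
  have hnn : S.le 0 (S.carr x - x) := by
    rw [← key]
    exact S.quad_nn _ hc _ (sub_mem S.one_mem hm) (S.proj_nn hc (S.carr_idem x hm))
      (S.sub_nn hm S.one_mem h1)
  exact S.le_of_sub_nn hm hc hnn

lemma proj_effect {p : R} (hp : p ∈ S.A) (hp2 : p * p = p) : p ∈ S.effects :=
  ⟨hp, S.proj_nn hp hp2,
    S.le_of_sub_nn hp S.one_mem (S.proj_nn (sub_mem S.one_mem hp) (compl_idem hp2))⟩

lemma le_flip {a b : R} (ha : a ∈ S.A) (hb : b ∈ S.A) (h : S.le a b) :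
    S.le (1 - b) (1 - a) := by
  apply S.le_of_sub_nn (sub_mem S.one_mem hb) (sub_mem S.one_mem ha)
  have heq : (1 : R) - a - (1 - b) = b - a := by abel
  rw [heq]
  exact S.sub_nn ha hb h

lemma le_unflip {a b : R} (ha : a ∈ S.A) (hb : b ∈ S.A) (h : S.le (1 - b) (1 - a)) :
    S.le a b := by
  apply S.le_of_sub_nn ha hb
  have h2 := S.sub_nn (sub_mem S.one_mem hb) (sub_mem S.one_mem ha) h
  have heq : (1 : R) - a - (1 - b) = b - a := by abel
  rwa [heq] at h2

lemma specProj_def (x : R) (l : ℝ) :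
    S.specProj x l = 1 - S.carr (S.pospart (x - l • 1)) := by
  unfold specProj
  rw [Algebra.algebraMap_eq_smul_one]

lemma specProj_of_neg {x : R} (hx : x ∈ S.A) (h0 : S.le 0 x) {l : ℝ} (hl : l < 0) :
    S.specProj x l = 0 := by
  have hl' : (0 : ℝ) < -l := by linarith
  have hnl : (-l : ℝ) ≠ 0 := ne_of_gt hl'
  have hy_mem : x - l • 1 ∈ S.A := sub_mem hx (S.A.smul_mem l S.one_mem)
  have hy_nn : S.le 0 (x - l • 1) := by
    have h1 : S.le 0 ((-l) • (1 : R)) := S.smul_nonneg (-l) hl'.le 1 S.one_mem S.le0_one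
    have h2 := S.add_nn hx (S.A.smul_mem (-l) S.one_mem) h0 h1
    rwa [neg_smul, ← sub_eq_add_neg] at h2
  rw [S.specProj_def, S.pospart_of_nn hy_mem hy_nn]
  set y := x - l • 1 with hy
  have ha_mem : (-l)⁻¹ • y ∈ S.A := S.A.smul_mem _ hy_mem
  have ha_ge : S.le 1 ((-l)⁻¹ • y) := by
    have heq : (-l)⁻¹ • y = (-l)⁻¹ • x + 1 := by
      rw [hy, smul_sub, smul_smul]
      have h5 : (-l)⁻¹ * l = -1 := by rw [inv_neg, neg_mul, inv_mul_cancel₀ hl.ne]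
      rw [h5]
      module
    rw [heq]
    have h2 : S.le 0 ((-l)⁻¹ • x) := S.smul_nonneg _ (inv_pos.mpr hl').le x hx h0
    have h3 := S.add_le_add_right 0 (zero_mem _) _ (S.A.smul_mem _ hx) 1 S.one_mem h2
    rwa [zero_add] at h3
  obtain ⟨b, hb, hab, hba⟩ := S.inv_exists _ ha_mem ha_ge
  have hcy : ((-l)⁻¹ • b) * y = 1 := by
    have hya : y = (-l) • ((-l)⁻¹ • y) := by
      rw [smul_smul, mul_inv_cancel₀ hnl, one_smul]
    calc ((-l)⁻¹ • b) * y = ((-l)⁻¹ • b) * ((-l) • ((-l)⁻¹ • y)) := by rw [← hya]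
      _ = ((-l)⁻¹ * (-l)) • (b * ((-l)⁻¹ • y)) := by rw [smul_mul_smul_comm]
      _ = b * ((-l)⁻¹ • y) := by rw [inv_mul_cancel₀ hnl, one_smul]
      _ = 1 := hba
  have h1 : y * (1 - S.carr y) = 0 := by
    rw [mul_sub, mul_one, S.mul_carr hy_mem, sub_self]
  have h2 : (1 : R) - S.carr y = 0 := by
    calc (1 : R) - S.carr y = (((-l)⁻¹ • b) * y) * (1 - S.carr y) := by rw [hcy, one_mul]
      _ = ((-l)⁻¹ • b) * (y * (1 - S.carr y)) := by rw [mul_assoc]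
      _ = 0 := by rw [h1, mul_zero]
  rw [sub_eq_zero] at h2
  rw [← h2, sub_self]

lemma specProj_of_ge_one {x : R} (hx : x ∈ S.A) (h1 : S.le x 1) {l : ℝ} (hl : 1 ≤ l) :
    S.specProj x l = 1 := by
  have hm : x - l • 1 ∈ S.A := sub_mem hx (S.A.smul_mem l S.one_mem)
  have hle : S.le x (l • 1) := by
    have h2 : S.le 0 ((l - 1) • (1 : R)) :=
      S.smul_nonneg _ (by linarith) 1 S.one_mem S.le0_one
    have h3 : S.le 1 (l • 1) := by
      apply S.le_of_sub_nn S.one_mem (S.A.smul_mem l S.one_mem)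
      have heq : l • (1 : R) - 1 = (l - 1) • 1 := by module
      rwa [heq]
    exact S.le_trans x hx 1 S.one_mem _ (S.A.smul_mem l S.one_mem) h1 h3
  have hnp : S.le (x - l • 1) 0 := by
    apply S.le_of_sub_nn hm (zero_mem _)
    have heq : (0 : R) - (x - l • 1) = l • 1 - x := by abel
    rw [heq]
    exact S.sub_nn hx (S.A.smul_mem l S.one_mem) hle
  rw [S.specProj_def, S.pospart_of_np hm hnp, S.carr_zero, sub_zero]

lemma specProj_proj_mid {p : R} (hp : p ∈ S.A) (hp2 : p * p = p) {l : ℝ} (h0 : 0 ≤ l)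
    (h1 : l < 1) : S.specProj p l = 1 - p := by
  have hm1 : l • (1 : R) ∈ S.A := S.A.smul_mem l S.one_mem
  have hym : p - l • 1 ∈ S.A := sub_mem hp hm1
  have hsm : ((1 - 2 * l) • p + l • (1 : R)) ∈ S.A := add_mem (S.A.smul_mem _ hp) hm1
  have hcmem : (1 : R) - p ∈ S.A := sub_mem S.one_mem hp
  have hs_nn : S.le 0 ((1 - 2 * l) • p + l • (1 : R)) := by
    have e : (1 - 2 * l) • p + l • (1 : R) = (1 - l) • p + l • ((1 : R) - p) := by module
    rw [e]
    exact S.add_nn (S.A.smul_mem _ hp) (S.A.smul_mem _ hcmem)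
      (S.smul_nonneg _ (by linarith) p hp (S.proj_nn hp hp2))
      (S.smul_nonneg _ h0 _ hcmem (S.proj_nn hcmem (compl_idem hp2)))
  have hsq : ((1 - 2 * l) • p + l • (1 : R)) * ((1 - 2 * l) • p + l • (1 : R))
      = (p - l • 1) * (p - l • 1) := by
    simp only [mul_add, add_mul, mul_sub, sub_mul, smul_mul_assoc, mul_smul_comm,
      mul_one, one_mul, hp2, smul_smul]
    module
  have hsqrt : S.sqrt ((p - l • 1) * (p - l • 1)) = (1 - 2 * l) • p + l • (1 : R) :=
    (S.eq_sqrt (S.sq_mem _ hym) (S.sq_nn _ hym) hsm hs_nn hsq).symm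
  rw [S.specProj_def]
  unfold pospart absval
  rw [hsqrt]
  have e2 : (2⁻¹ : ℝ) • ((1 - 2 * l) • p + l • (1 : R) + (p - l • 1)) = (1 - l) • p := by
    module
  rw [e2, S.carr_smul hp (by linarith : (1 : ℝ) - l ≠ 0), S.carr_eq_self hp hp2]

lemma carr_pospart_le {x r : R} (hm : x ∈ S.A) (h0 : S.le 0 x)
    (hr : r ∈ S.A) (hr2 : r * r = r)
    (hcr : S.carr x * r = S.carr x) {l : ℝ} (hl : 0 ≤ l) :
    S.carr (S.pospart (x - l • 1)) * r = S.carr (S.pospart (x - l • 1)) := by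
  have hc := S.carr_mem x hm
  have hrc : r * S.carr x = S.carr x := (S.proj_facts hc (S.carr_idem x hm) hr hr2 hcr).1
  have hxr : x * r = x := by
    calc x * r = x * S.carr x * r := by rw [S.mul_carr hm]
      _ = x * (S.carr x * r) := by rw [mul_assoc]
      _ = x := by rw [hcr, S.mul_carr hm]
  have hrx : r * x = x := by
    calc r * x = r * (S.carr x * x) := by rw [S.carr_mul hm h0]
      _ = r * S.carr x * x := by rw [mul_assoc]
      _ = x := by rw [hrc, S.carr_mul hm h0]
  set y := x - l • 1 with hydef
  clear_value y
  have hym : y ∈ S.A := by rw [hydef]; exact sub_mem hm (S.A.smul_mem l S.one_mem)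
  have hx1r : x * (1 - r) = 0 := by rw [mul_sub, mul_one, hxr, sub_self]
  have hy1r : y * (1 - r) = (-l) • (1 - r) := by
    rw [hydef, sub_mul, hx1r, smul_mul_assoc, one_mul, zero_sub, neg_smul]
  have hyr_comm : y * r = r * y := by
    rw [hydef, sub_mul, mul_sub, hxr, hrx, smul_mul_assoc, mul_smul_comm, one_mul, mul_one]
  have hyy_mem : y * y ∈ S.A := S.sq_mem y hym
  have hyy_nn := S.sq_nn y hym
  have hs_mem : S.sqrt (y * y) ∈ S.A := S.sqrt_mem _ hyy_mem hyy_nn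
  have hs_nn : S.le 0 (S.sqrt (y * y)) := S.sqrt_nn _ hyy_mem hyy_nn
  have hs_sq : S.sqrt (y * y) * S.sqrt (y * y) = y * y := S.sqrt_sq _ hyy_mem hyy_nn
  have hsr : S.sqrt (y * y) * r = r * S.sqrt (y * y) := by
    apply S.sqrt_bicomm _ hyy_mem hyy_nn r hr
    rw [mul_assoc, hyr_comm, ← mul_assoc, hyr_comm, mul_assoc]
  have h1r_mem : (1 : R) - r ∈ S.A := sub_mem S.one_mem hr
  have h1r2 : ((1 : R) - r) * (1 - r) = 1 - r := compl_idem hr2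
  have h1r_nn : S.le 0 ((1 : R) - r) := S.proj_nn h1r_mem h1r2
  have hs1r : S.sqrt (y * y) * (1 - r) = (1 - r) * S.sqrt (y * y) := by
    rw [mul_sub, sub_mul, mul_one, one_mul, hsr]
  have hz_eq : (1 - r) * S.sqrt (y * y) * (1 - r) = S.sqrt (y * y) * (1 - r) := by
    rw [← hs1r, mul_assoc, h1r2]
  have hz_mem : S.sqrt (y * y) * (1 - r) ∈ S.A := by
    rw [← hz_eq]; exact S.quad_mem _ h1r_mem _ hs_mem
  have hz_nn : S.le 0 (S.sqrt (y * y) * (1 - r)) := by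
    rw [← hz_eq]; exact S.quad_nn _ h1r_mem _ hs_mem h1r_nn hs_nn
  have hyy1r : (y * y) * (1 - r) = (l * l) • (1 - r) := by
    rw [mul_assoc, hy1r, mul_smul_comm, hy1r, smul_smul, neg_mul_neg]
  have hz_sq : (S.sqrt (y * y) * (1 - r)) * (S.sqrt (y * y) * (1 - r))
      = (l * l) • (1 - r) := by
    have e1 : (1 - r) * (S.sqrt (y * y) * (1 - r)) = S.sqrt (y * y) * (1 - r) := by
      rw [← mul_assoc, ← hs1r, mul_assoc, h1r2]
    rw [mul_assoc, e1, ← mul_assoc, hs_sq, hyy1r]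
  have hw_mem : (l * l) • ((1 : R) - r) ∈ S.A := S.A.smul_mem _ h1r_mem
  have hw_nn : S.le 0 ((l * l) • ((1 : R) - r)) :=
    S.smul_nonneg _ (mul_self_nonneg l) _ h1r_mem h1r_nn
  have hz_sqrt : S.sqrt (y * y) * (1 - r) = S.sqrt ((l * l) • ((1 : R) - r)) :=
    S.eq_sqrt hw_mem hw_nn hz_mem hz_nn hz_sq
  have hl1r_sqrt : l • ((1 : R) - r) = S.sqrt ((l * l) • ((1 : R) - r)) := by
    apply S.eq_sqrt hw_mem hw_nn (S.A.smul_mem _ h1r_mem)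
      (S.smul_nonneg _ hl _ h1r_mem h1r_nn)
    rw [smul_mul_smul_comm, h1r2]
  have hzl : S.sqrt (y * y) * (1 - r) = l • ((1 : R) - r) := by
    rw [hz_sqrt, ← hl1r_sqrt]
  have hu1r : S.pospart y * (1 - r) = 0 := by
    unfold pospart absval
    rw [smul_mul_assoc, add_mul, hzl, hy1r]
    have e3 : l • ((1 : R) - r) + (-l) • ((1 : R) - r) = 0 := by module
    rw [e3, smul_zero]
  have hu_mem : S.pospart y ∈ S.A := S.pospart_mem hym
  have hcu : S.carr (S.pospart y) * (1 - r) = 0 :=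
    (S.carr_spec _ hu_mem _ h1r_mem).mp hu1r
  rw [mul_sub, mul_one, sub_eq_zero] at hcu
  exact hcu.symm

lemma specLE_of_carr_le {x r : R} (hm : x ∈ S.A) (h0 : S.le 0 x) (h1 : S.le x 1)
    (hr : r ∈ S.A) (hr2 : r * r = r) (h : S.le (S.carr x) r) : S.specLE x r := by
  intro l
  have hcr : S.carr x * r = S.carr x :=
    S.proj_mul_of_le (S.carr_mem x hm) (S.carr_idem x hm) hr hr2 h
  rcases lt_or_ge l 0 with hl | hl
  · rw [S.specProj_of_neg hr (S.proj_nn hr hr2) hl, S.specProj_of_neg hm h0 hl]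
    exact S.le_refl 0 (zero_mem _)
  rcases lt_or_ge l 1 with hl1 | hl1
  · rw [S.specProj_proj_mid hr hr2 hl hl1, S.specProj_def]
    have hkey := S.carr_pospart_le hm h0 hr hr2 hcr hl
    have hpm : S.pospart (x - l • 1) ∈ S.A :=
      S.pospart_mem (sub_mem hm (S.A.smul_mem l S.one_mem))
    have hcm : S.carr (S.pospart (x - l • 1)) ∈ S.A := S.carr_mem _ hpm
    have hle := (S.proj_facts hcm (S.carr_idem _ hpm) hr hr2 hkey).2
    exact S.le_flip hcm hr hle
  · rw [S.specProj_of_ge_one hr (S.proj_effect hr hr2).2.2 hl1,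
      S.specProj_of_ge_one hm h1 hl1]
    exact S.le_refl 1 S.one_mem

lemma specProj_zero {x : R} (hx : x ∈ S.A) (h0 : S.le 0 x) :
    S.specProj x 0 = 1 - S.carr x := by
  rw [S.specProj_def]
  simp only [zero_smul, sub_zero]
  rw [S.pospart_of_nn hx h0]

lemma carr_le_of_specLE {x z : R} (hx : x ∈ S.A) (h0x : S.le 0 x) (hz : z ∈ S.A)
    (h0z : S.le 0 z) (h : S.specLE x z) : S.le (S.carr x) (S.carr z) := by
  have h2 := h 0
  rw [S.specProj_zero hz h0z, S.specProj_zero hx h0x] at h2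
  exact S.le_unflip (S.carr_mem x hx) (S.carr_mem z hz) h2

lemma specLE_proj_of_le {p q : R} (hp : p ∈ S.A) (hp2 : p * p = p) (hq : q ∈ S.A)
    (hq2 : q * q = q) (h : S.le p q) : S.specLE p q := by
  intro l
  rcases lt_or_ge l 0 with hl | hl
  · rw [S.specProj_of_neg hq (S.proj_nn hq hq2) hl,
      S.specProj_of_neg hp (S.proj_nn hp hp2) hl]
    exact S.le_refl 0 (zero_mem _)
  rcases lt_or_ge l 1 with hl1 | hl1
  · rw [S.specProj_proj_mid hq hq2 hl hl1, S.specProj_proj_mid hp hp2 hl hl1]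
    exact S.le_flip hp hq h
  · rw [S.specProj_of_ge_one hq (S.proj_effect hq hq2).2.2 hl1,
      S.specProj_of_ge_one hp (S.proj_effect hp hp2).2.2 hl1]
    exact S.le_refl 1 S.one_mem

end SynapticAlgebra

/-- For effects `e, f`:
(i) if `e ∨ f` exists in `(E, ≤)` (resp. `e ∨ₛ f` in `(E, ≤ₛ)`), then its carrier is the
join `e° ∨ f°` in `P`;
(ii) if `e ∧ f` exists in `(E, ≤)` (resp. `e ∧ₛ f` in `(E, ≤ₛ)`), then its carrier is
below the meet `e° ∧ f°` in `P`. -/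
theorem carrier_sup_inf {R : Type*} [Ring R] [Algebra ℝ R]
    (S : SynapticAlgebra R) (e f : R) (he : e ∈ S.effects) (hf : f ∈ S.effects) :
    (∀ g ∈ S.effects,
      (S.le e g ∧ S.le f g ∧ ∀ h ∈ S.effects, S.le e h → S.le f h → S.le g h) →
      S.IsProjSup (S.carr g) {S.carr e, S.carr f}) ∧
    (∀ g ∈ S.effects,
      (S.specLE e g ∧ S.specLE f g ∧
        ∀ h ∈ S.effects, S.specLE e h → S.specLE f h → S.specLE g h) →
      S.IsProjSup (S.carr g) {S.carr e, S.carr f}) ∧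
    (∀ g ∈ S.effects,
      (S.le g e ∧ S.le g f ∧ ∀ h ∈ S.effects, S.le h e → S.le h f → S.le h g) →
      ∀ m : R, S.IsProjInf m {S.carr e, S.carr f} → S.le (S.carr g) m) ∧
    (∀ g ∈ S.effects,
      (S.specLE g e ∧ S.specLE g f ∧
        ∀ h ∈ S.effects, S.specLE h e → S.specLE h f → S.specLE h g) →
      ∀ m : R, S.IsProjInf m {S.carr e, S.carr f} → S.specLE (S.carr g) m) := by
  obtain ⟨hem, he0, he1⟩ := he
  obtain ⟨hfm, hf0, hf1⟩ := hf
  have hce := S.carr_mem e hem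
  have hie := S.carr_idem e hem
  have hcf := S.carr_mem f hfm
  have hif := S.carr_idem f hfm
  refine ⟨?_, ?_, ?_, ?_⟩
  · rintro g ⟨hgm, hg0, hg1⟩ ⟨hge, hgf, hlub⟩
    refine ⟨⟨S.carr_mem g hgm, S.carr_idem g hgm⟩, ?_, ?_⟩
    · rintro q (rfl | rfl)
      · exact S.carr_mono hem hgm he0 hge
      · exact S.carr_mono hfm hgm hf0 hgf
    · rintro r ⟨hr, hr2⟩ hub
      have hre : S.le (S.carr e) r := hub _ (Set.mem_insert _ _)
      have hrf : S.le (S.carr f) r := hub _ (Set.mem_insert_of_mem _ rfl)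
      have her : S.le e r :=
        S.le_trans e hem _ hce r hr (S.le_carr_of_effect hem he0 he1) hre
      have hfr : S.le f r :=
        S.le_trans f hfm _ hcf r hr (S.le_carr_of_effect hfm hf0 hf1) hrf
      have hgr : S.le g r := hlub r (S.proj_effect hr hr2) her hfr
      have h := S.carr_mono hgm hr hg0 hgr
      rwa [S.carr_eq_self hr hr2] at h
  · rintro g ⟨hgm, hg0, hg1⟩ ⟨hge, hgf, hlub⟩
    refine ⟨⟨S.carr_mem g hgm, S.carr_idem g hgm⟩, ?_, ?_⟩
    · rintro q (rfl | rfl)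
      · exact S.carr_le_of_specLE hem he0 hgm hg0 hge
      · exact S.carr_le_of_specLE hfm hf0 hgm hg0 hgf
    · rintro r ⟨hr, hr2⟩ hub
      have hre : S.le (S.carr e) r := hub _ (Set.mem_insert _ _)
      have hrf : S.le (S.carr f) r := hub _ (Set.mem_insert_of_mem _ rfl)
      have hse : S.specLE e r := S.specLE_of_carr_le hem he0 he1 hr hr2 hre
      have hsf : S.specLE f r := S.specLE_of_carr_le hfm hf0 hf1 hr hr2 hrf
      have hgr : S.specLE g r := hlub r (S.proj_effect hr hr2) hse hsf
      have h := S.carr_le_of_specLE hgm hg0 hr (S.proj_nn hr hr2) hgr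
      rwa [S.carr_eq_self hr hr2] at h
  · rintro g ⟨hgm, hg0, hg1⟩ ⟨hge, hgf, _⟩ m ⟨⟨hmm, hm2⟩, hmlb, hmgr⟩
    apply hmgr (S.carr g) ⟨S.carr_mem g hgm, S.carr_idem g hgm⟩
    rintro q (rfl | rfl)
    · exact S.carr_mono hgm hem hg0 hge
    · exact S.carr_mono hgm hfm hg0 hgf
  · rintro g ⟨hgm, hg0, hg1⟩ ⟨hge, hgf, _⟩ m ⟨⟨hmm, hm2⟩, hmlb, hmgr⟩
    have h1 : S.le (S.carr g) m := by
      apply hmgr (S.carr g) ⟨S.carr_mem g hgm, S.carr_idem g hgm⟩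
      rintro q (rfl | rfl)
      · exact S.carr_le_of_specLE hgm hg0 hem he0 hge
      · exact S.carr_le_of_specLE hgm hg0 hfm hf0 hgf
    exact S.specLE_proj_of_le (S.carr_mem g hgm) (S.carr_idem g hgm) hmm hm2 h1
end

section
/- Let A be a synaptic algebra, let e ∈ E = {e ∈ A : 0 ≤ e ≤ 1}, and let (pₙ)_{n∈ℕ} be a sequence of projections in CC(e) satisfying 0 ≤ e − Σ_{j=1}^{n} 2^{−j} p_j ≤ 2^{−n} for every n ∈ ℕ (so that e = Σ_{n=1}^{∞} 2^{−n} pₙ in norm). Then the carrier of e is the supremum of the pₙ in the lattice of projections: e° = ⋁_{n=1}^{∞} pₙ. -/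
open Filter Topology

namespace SynAux

variable {R : Type*} [Ring R] [Algebra ℝ R] (S : SynapticAlgebra R)

lemma le_of_nonneg_sub {a b : R} (ha : a ∈ S.A) (hb : b ∈ S.A)
    (h : S.le 0 (b - a)) : S.le a b := by
  have := S.add_le_add_right 0 S.A.zero_mem (b - a) (S.A.sub_mem hb ha) a ha h
  simpa using this

lemma nonneg_sub_of_le {a b : R} (ha : a ∈ S.A) (hb : b ∈ S.A)
    (h : S.le a b) : S.le 0 (b - a) := by
  have := S.add_le_add_right a ha b hb (-a) (S.A.neg_mem ha) h
  simpa [← sub_eq_add_neg] using this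

lemma add_nonneg' {a b : R} (ha : a ∈ S.A) (hb : b ∈ S.A)
    (h1 : S.le 0 a) (h2 : S.le 0 b) : S.le 0 (a + b) := by
  have h3 : S.le b (a + b) := by
    have := S.add_le_add_right 0 S.A.zero_mem a ha b hb h1
    simpa using this
  exact S.le_trans 0 S.A.zero_mem b hb (a + b) (S.A.add_mem ha hb) h2 h3

lemma smul_le_smul {t : ℝ} (ht : 0 ≤ t) {a b : R} (ha : a ∈ S.A) (hb : b ∈ S.A)
    (h : S.le a b) : S.le (t • a) (t • b) := by
  apply le_of_nonneg_sub S (S.A.smul_mem t ha) (S.A.smul_mem t hb)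
  have := S.smul_nonneg t ht (b - a) (S.A.sub_mem hb ha) (nonneg_sub_of_le S ha hb h)
  simpa [smul_sub] using this

lemma proj_nonneg {q : R} (hqA : q ∈ S.A) (hq : q * q = q) : S.le 0 q := by
  have := S.sq_nn q hqA; rwa [hq] at this

lemma compl_mem {q : R} (hqA : q ∈ S.A) : (1 - q) ∈ S.A := S.A.sub_mem S.one_mem hqA

lemma compl_proj {q : R} (hq : q * q = q) : (1 - q) * (1 - q) = 1 - q := by
  simp only [sub_mul, mul_sub, one_mul, mul_one, hq]; abel

lemma proj_le_proj {q r : R} (hqA : q ∈ S.A) (hrA : r ∈ S.A) (hq : q * q = q)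
    (hr : r * r = r) (h1 : r * q = q) (h2 : q * r = q) : S.le q r := by
  have key : (1 - q) * r * (1 - q) = r - q := by
    simp only [sub_mul, mul_sub, one_mul, mul_one, h1, h2, hq]; abel
  have h0 : S.le 0 ((1 - q) * r * (1 - q)) :=
    S.quad_nn (1 - q) (compl_mem S hqA) r hrA
      (proj_nonneg S (compl_mem S hqA) (compl_proj hq)) (proj_nonneg S hrA hr)
  rw [key] at h0
  exact le_of_nonneg_sub S hqA hrA h0

lemma carr_absorb {e : R} (heA : e ∈ S.A) (he : S.le 0 e) :
    S.carr e * e = e ∧ e * S.carr e = e := by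
  have hcA := S.carr_mem e heA
  have hcc := S.carr_idem e heA
  have hcz : S.carr e * (1 - S.carr e) = 0 := by
    rw [mul_sub, mul_one, hcc, sub_self]
  have h1 : e * (1 - S.carr e) = 0 :=
    (S.carr_spec e heA (1 - S.carr e) (compl_mem S hcA)).mpr hcz
  have h2 : (1 - S.carr e) * e * (1 - S.carr e) = 0 := by
    rw [mul_assoc, h1, mul_zero]
  obtain ⟨h3, h4⟩ := S.quad_zero (1 - S.carr e) (compl_mem S hcA) e heA he h2
  constructor
  · have := h3; rw [sub_mul, one_mul, sub_eq_zero] at this; exact this.symm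
  · have := h1; rw [mul_sub, mul_one, sub_eq_zero] at this; exact this.symm

lemma proj_le_carr {e q : R} (heA : e ∈ S.A) (he : S.le 0 e) (hqA : q ∈ S.A)
    (hq : q * q = q) (t : ℝ) (hle : S.le q (t • e)) : S.le q (S.carr e) := by
  obtain ⟨hce, _⟩ := carr_absorb S heA he
  have hcA := S.carr_mem e heA
  have hcc := S.carr_idem e heA
  have haA : (1 - S.carr e) ∈ S.A := compl_mem S hcA
  have ha2 : (1 - S.carr e) * (1 - S.carr e) = 1 - S.carr e := compl_proj hcc
  have hanon : S.le 0 (1 - S.carr e) := proj_nonneg S haA ha2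
  have hq0 : S.le 0 q := proj_nonneg S hqA hq
  have hce0 : (1 - S.carr e) * e = 0 := by rw [sub_mul, one_mul, hce, sub_self]
  have hkey : (1 - S.carr e) * (t • e) * (1 - S.carr e) = 0 := by
    rw [mul_smul_comm, hce0, smul_zero, zero_mul]
  have hteA : (t • e) ∈ S.A := S.A.smul_mem t heA
  have hsub : S.le 0 (t • e - q) := nonneg_sub_of_le S hqA hteA hle
  have h5 : S.le 0 ((1 - S.carr e) * (t • e - q) * (1 - S.carr e)) :=
    S.quad_nn _ haA _ (S.A.sub_mem hteA hqA) hanon hsub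
  have hexp : (1 - S.carr e) * (t • e - q) * (1 - S.carr e)
      = -((1 - S.carr e) * q * (1 - S.carr e)) := by
    rw [mul_sub (1 - S.carr e) (t • e) q, sub_mul, hkey, zero_sub]
  rw [hexp] at h5
  have h6 : S.le 0 ((1 - S.carr e) * q * (1 - S.carr e)) :=
    S.quad_nn _ haA _ hqA hanon hq0
  have hqqA : (1 - S.carr e) * q * (1 - S.carr e) ∈ S.A := S.quad_mem _ haA _ hqA
  have h7 : S.le ((1 - S.carr e) * q * (1 - S.carr e)) 0 := by
    apply le_of_nonneg_sub S hqqA S.A.zero_mem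
    simpa using h5
  have h8 : (1 - S.carr e) * q * (1 - S.carr e) = 0 :=
    S.le_antisymm _ hqqA 0 S.A.zero_mem h7 (by simpa using h6)
  obtain ⟨h9, h10⟩ := S.quad_zero (1 - S.carr e) haA q hqA hq0 h8
  have hcq : S.carr e * q = q := by
    rw [sub_mul, one_mul, sub_eq_zero] at h9; exact h9.symm
  have hqc : q * S.carr e = q := by
    rw [mul_sub, mul_one, sub_eq_zero] at h10; exact h10.symm
  exact proj_le_proj S hqA hcA hq hcc hcq hqc

lemma carr_le_proj {e r : R} (heA : e ∈ S.A) (he : S.le 0 e) (hrA : r ∈ S.A)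
    (hr : r * r = r) (hle : S.le e r) : S.le (S.carr e) r := by
  have hcA := S.carr_mem e heA
  have hcc := S.carr_idem e heA
  have haA : (1 - r) ∈ S.A := compl_mem S hrA
  have ha2 : (1 - r) * (1 - r) = 1 - r := compl_proj hr
  have hanon : S.le 0 (1 - r) := proj_nonneg S haA ha2
  have h1 : (1 - r) * r * (1 - r) = 0 := by
    rw [sub_mul, one_mul, hr, sub_self, zero_mul]
  have hsub : S.le 0 (r - e) := nonneg_sub_of_le S heA hrA hle
  have h2 : S.le 0 ((1 - r) * (r - e) * (1 - r)) :=
    S.quad_nn _ haA _ (S.A.sub_mem hrA heA) hanon hsub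
  have hexp : (1 - r) * (r - e) * (1 - r) = -((1 - r) * e * (1 - r)) := by
    rw [mul_sub (1 - r) r e, sub_mul, h1, zero_sub]
  rw [hexp] at h2
  have h3 : S.le 0 ((1 - r) * e * (1 - r)) := S.quad_nn _ haA _ heA hanon he
  have hmemA : (1 - r) * e * (1 - r) ∈ S.A := S.quad_mem _ haA _ heA
  have h4 : S.le ((1 - r) * e * (1 - r)) 0 := by
    apply le_of_nonneg_sub S hmemA S.A.zero_mem
    simpa using h2
  have h5 : (1 - r) * e * (1 - r) = 0 :=
    S.le_antisymm _ hmemA 0 S.A.zero_mem h4 (by simpa using h3)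
  obtain ⟨_, h7⟩ := S.quad_zero (1 - r) haA e heA he h5
  have h8 : S.carr e * (1 - r) = 0 := (S.carr_spec e heA (1 - r) haA).mp h7
  have h9 : (1 - r) * S.carr e * (1 - r) = 0 := by rw [mul_assoc, h8, mul_zero]
  have hc0 : S.le 0 (S.carr e) := proj_nonneg S hcA hcc
  obtain ⟨h10, _⟩ := S.quad_zero (1 - r) haA (S.carr e) hcA hc0 h9
  have hrc : r * S.carr e = S.carr e := by
    rw [sub_mul, one_mul, sub_eq_zero] at h10; exact h10.symm
  have hcr : S.carr e * r = S.carr e := by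
    rw [mul_sub, mul_one, sub_eq_zero] at h8; exact h8.symm
  exact proj_le_proj S hcA hrA hcc hr hrc hcr

lemma sum_nonneg' (s : Finset ℕ) (f : ℕ → R) (hmem : ∀ j ∈ s, f j ∈ S.A)
    (hnn : ∀ j ∈ s, S.le 0 (f j)) : S.le 0 (∑ j ∈ s, f j) := by
  classical
  induction s using Finset.cons_induction with
  | empty => simpa using S.le_refl 0 S.A.zero_mem
  | cons a s ha ih =>
      rw [Finset.sum_cons]
      exact add_nonneg' S (hmem a (by simp)) (Submodule.sum_mem _ fun j hj => hmem j (by simp [hj]))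
        (hnn a (by simp)) (ih (fun j hj => hmem j (by simp [hj])) (fun j hj => hnn j (by simp [hj])))

lemma geom_sum_Icc (n : ℕ) : ∑ j ∈ Finset.Icc 1 n, ((1 : ℝ) / 2 ^ j) = 1 - 1 / 2 ^ n := by
  induction n with
  | zero => simp
  | succ n ih =>
      rw [Finset.sum_Icc_succ_top (by omega), ih, pow_succ]
      field_simp
      ring

end SynAux

/-- If `e = Σ 2⁻ⁿ pₙ` is the dyadic decomposition of an effect `e` by
projections `pₙ ∈ CC(e)` (with the partial-sum bounds), then `e° = ⋁ₙ pₙ` in `P`. -/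
theorem carrier_eq_sup_dyadic {R : Type*} [Ring R] [Algebra ℝ R]
    (S : SynapticAlgebra R) (e : R) (he : e ∈ S.effects) (p : ℕ → R)
    (hp : ∀ n : ℕ, S.IsProj (p n) ∧ p n ∈ S.Bicomm e)
    (hbd : ∀ n : ℕ,
      S.le 0 (e - ∑ j ∈ Finset.Icc 1 n, ((1 : ℝ) / 2 ^ j) • p j) ∧
      S.le (e - ∑ j ∈ Finset.Icc 1 n, ((1 : ℝ) / 2 ^ j) • p j)
        (((1 : ℝ) / 2 ^ n) • (1 : R))) :
    S.IsProjSup (S.carr e) {x | ∃ n : ℕ, 1 ≤ n ∧ x = p n} := by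
  obtain ⟨heA, he0, he1⟩ := he
  have hcA := S.carr_mem e heA
  have hcc := S.carr_idem e heA
  have hpA : ∀ j, p j ∈ S.A := fun j => (hp j).1.1
  have hpp : ∀ j, p j * p j = p j := fun j => (hp j).1.2
  have hpnn : ∀ j, S.le 0 (p j) := fun j => SynAux.proj_nonneg S (hpA j) (hpp j)
  have hfA : ∀ j, ((1 : ℝ) / 2 ^ j) • p j ∈ S.A := fun j => S.A.smul_mem _ (hpA j)
  have hfnn : ∀ j, S.le 0 (((1 : ℝ) / 2 ^ j) • p j) := fun j =>
    S.smul_nonneg _ (by positivity) _ (hpA j) (hpnn j)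
  have hsumA : ∀ n : ℕ, ∑ j ∈ Finset.Icc 1 n, ((1 : ℝ) / 2 ^ j) • p j ∈ S.A := fun n =>
    Submodule.sum_mem _ fun j _ => hfA j
  refine ⟨⟨hcA, hcc⟩, ?_, ?_⟩
  · rintro q ⟨n, hn, rfl⟩
    have hnmem : n ∈ Finset.Icc 1 n := Finset.mem_Icc.mpr ⟨hn, le_refl n⟩
    have heraseA : ∑ j ∈ (Finset.Icc 1 n).erase n, ((1 : ℝ) / 2 ^ j) • p j ∈ S.A :=
      Submodule.sum_mem _ fun j _ => hfA j
    have hsplit : e - ((1 : ℝ) / 2 ^ n) • p n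
        = (e - ∑ j ∈ Finset.Icc 1 n, ((1 : ℝ) / 2 ^ j) • p j)
          + ∑ j ∈ (Finset.Icc 1 n).erase n, ((1 : ℝ) / 2 ^ j) • p j := by
      rw [← Finset.add_sum_erase _ _ hnmem]; abel
    have h1 : S.le 0 (e - ((1 : ℝ) / 2 ^ n) • p n) := by
      rw [hsplit]
      exact SynAux.add_nonneg' S (S.A.sub_mem heA (hsumA n)) heraseA (hbd n).1
        (SynAux.sum_nonneg' S _ _ (fun j _ => hfA j) (fun j _ => hfnn j))
    have h2 : ((2 : ℝ) ^ n) • (e - ((1 : ℝ) / 2 ^ n) • p n) = ((2 : ℝ) ^ n) • e - p n := by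
      rw [smul_sub, smul_smul, mul_one_div, div_self (pow_ne_zero n (by norm_num : (2:ℝ) ≠ 0)),
        one_smul]
    have h3 : S.le 0 (((2 : ℝ) ^ n) • e - p n) := by
      rw [← h2]
      exact S.smul_nonneg _ (by positivity) _ (S.A.sub_mem heA (hfA n)) h1
    have h4 : S.le (p n) (((2 : ℝ) ^ n) • e) :=
      SynAux.le_of_nonneg_sub S (hpA n) (S.A.smul_mem _ heA) h3
    exact SynAux.proj_le_carr S heA he0 (hpA n) (hpp n) _ h4
  · intro r hrP hub
    have hrA := hrP.1
    have hrr := hrP.2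
    have hr0 : S.le 0 r := SynAux.proj_nonneg S hrA hrr
    have hub' : ∀ n, 1 ≤ n → S.le (p n) r := fun n hn => hub (p n) ⟨n, hn, rfl⟩
    have hstep : ∀ n : ℕ, S.le (∑ j ∈ Finset.Icc 1 n, ((1 : ℝ) / 2 ^ j) • p j) r := by
      intro n
      apply SynAux.le_of_nonneg_sub S (hsumA n) hrA
      have hsplit : r - ∑ j ∈ Finset.Icc 1 n, ((1 : ℝ) / 2 ^ j) • p j
          = (1 - ∑ j ∈ Finset.Icc 1 n, ((1 : ℝ) / 2 ^ j)) • r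
            + ∑ j ∈ Finset.Icc 1 n, ((1 : ℝ) / 2 ^ j) • (r - p j) := by
        rw [sub_smul, one_smul]
        simp only [smul_sub]
        rw [Finset.sum_sub_distrib, Finset.sum_smul]
        abel
      rw [hsplit]
      refine SynAux.add_nonneg' S (S.A.smul_mem _ hrA)
        (Submodule.sum_mem _ fun j _ => S.A.smul_mem _ (S.A.sub_mem hrA (hpA j))) ?_ ?_
      · apply S.smul_nonneg _ ?_ r hrA hr0
        rw [SynAux.geom_sum_Icc, sub_sub_cancel]
        positivity
      · refine SynAux.sum_nonneg' S _ _ (fun j _ => S.A.smul_mem _ (S.A.sub_mem hrA (hpA j)))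
          (fun j hj => ?_)
        have hj1 : 1 ≤ j := (Finset.mem_Icc.mp hj).1
        exact S.smul_nonneg _ (by positivity) _ (S.A.sub_mem hrA (hpA j))
          (SynAux.nonneg_sub_of_le S (hpA j) hrA (hub' j hj1))
    have hbound : ∀ n : ℕ, S.le (e - r) (((1 : ℝ) / 2 ^ n) • (1 : R)) := by
      intro n
      have hxA : ((1 : ℝ) / 2 ^ n) • (1 : R) ∈ S.A := S.A.smul_mem _ S.one_mem
      have hi := S.add_le_add_right _ (S.A.sub_mem heA (hsumA n)) _ hxA _ (hsumA n) (hbd n).2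
      have hE : e - (∑ j ∈ Finset.Icc 1 n, ((1 : ℝ) / 2 ^ j) • p j)
          + (∑ j ∈ Finset.Icc 1 n, ((1 : ℝ) / 2 ^ j) • p j) = e := by abel
      rw [hE] at hi
      have hi' : S.le e ((∑ j ∈ Finset.Icc 1 n, ((1 : ℝ) / 2 ^ j) • p j)
          + ((1 : ℝ) / 2 ^ n) • (1 : R)) := by rwa [add_comm] at hi
      have hii := S.add_le_add_right _ (hsumA n) r hrA _ hxA (hstep n)
      have hiii : S.le e (r + ((1 : ℝ) / 2 ^ n) • (1 : R)) :=
        S.le_trans e heA _ (S.A.add_mem (hsumA n) hxA) _ (S.A.add_mem hrA hxA) hi' hii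
      have hiv := S.add_le_add_right e heA _ (S.A.add_mem hrA hxA) (-r) (S.A.neg_mem hrA) hiii
      have hE2 : r + ((1 : ℝ) / 2 ^ n) • (1 : R) + -r = ((1 : ℝ) / 2 ^ n) • (1 : R) := by abel
      have hE3 : e + -r = e - r := by abel
      rw [hE2, hE3] at hiv
      exact hiv
    have herA : e - r ∈ S.A := S.A.sub_mem heA hrA
    have h1A : ∀ m : ℕ, ((m : ℝ)) • (((1 : ℝ) / 2 ^ m) • (1 : R)) ∈ S.A := fun m =>
      S.A.smul_mem _ (S.A.smul_mem _ S.one_mem)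
    have harch : S.le (e - r) 0 := by
      apply S.arch _ herA 1 S.one_mem
      intro m
      have h1 : S.le ((m : ℝ) • (e - r)) ((m : ℝ) • (((1 : ℝ) / 2 ^ m) • (1 : R))) :=
        SynAux.smul_le_smul S (by positivity) herA (S.A.smul_mem _ S.one_mem) (hbound m)
      have h2 : S.le ((m : ℝ) • (((1 : ℝ) / 2 ^ m) • (1 : R))) 1 := by
        apply SynAux.le_of_nonneg_sub S (h1A m) S.one_mem
        have h3 : (1 : R) - (m : ℝ) • (((1 : ℝ) / 2 ^ m) • (1 : R))
            = (1 - (m : ℝ) / 2 ^ m) • (1 : R) := by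
          rw [smul_smul, mul_one_div, sub_smul, one_smul]
        rw [h3]
        apply S.smul_nonneg _ ?_ 1 S.one_mem (SynAux.proj_nonneg S S.one_mem (one_mul 1))
        have hm : (m : ℝ) ≤ 2 ^ m := by exact_mod_cast (Nat.lt_two_pow_self (n := m)).le
        have h2m : (0 : ℝ) < 2 ^ m := by positivity
        rw [sub_nonneg, div_le_one h2m]; exact hm
      exact S.le_trans _ (S.A.smul_mem _ herA) _ (h1A m) 1 S.one_mem h1 h2
    have her : S.le e r := by
      have h := S.add_le_add_right _ herA 0 S.A.zero_mem r hrA harch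
      have hE : e - r + r = e := by abel
      rw [hE, zero_add] at h
      exact h
    exact SynAux.carr_le_proj S heA he0 hrA hrr her
end
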